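/- Zero 𝓗-duality gap implies sectional closedness: if (f + δ_E)^*(x*) = φ_𝓗(x*) (where φ_𝓗(x*) = inf_{H∈𝓗, μ∈ℝ₊^H} (f + ∑_{t∈H} μ_t f_t)^*(x*)), then (closure of co 𝓐_𝓗) ∩ ({x*}×ℝ) = closure( 𝓐_𝓗 ∩ ({x*}×ℝ) ). -/

import Mathlib

open scoped BigOperators Pointwise
open Classical

/-- Fenchel–Legendre conjugate of an extended-real-valued function,
evaluated on the weak* dual. -/
noncomputable def conjFn {X : Type*} [AddCommGroup X] [Module ℝ X] [TopologicalSpace X]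
    (g : X → EReal) (p : WeakDual ℝ X) : EReal :=
  ⨆ x : X, ((p x : ℝ) : EReal) - g x

/-- The Lagrangian `f + ∑_{t ∈ H} μ t • f_t` (with values in the extended reals,
using the convention `0 * (+∞) = 0`). -/
noncomputable def lagFn {X T : Type*} (f : X → EReal) (ft : T → X → EReal)
    (H : Finset T) (μ : T → ℝ) : X → EReal :=
  fun x => f x + ∑ t ∈ H, ((μ t : EReal) * ft t x)

/-- `f + δ_E`, where `E = ⋂_{t ∈ T} {f_t ≤ 0}`. -/
noncomputable def fPlusIndicator {X T : Type*} (f : X → EReal) (ft : T → X → EReal) :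
    X → EReal :=
  fun x => if ∀ t : T, ft t x ≤ 0 then f x else ⊤

/-- The epigraph (inside `X* × ℝ`) of the conjugate of `g`. -/
def epiConj {X : Type*} [AddCommGroup X] [Module ℝ X] [TopologicalSpace X]
    (g : X → EReal) : Set (WeakDual ℝ X × ℝ) :=
  {q | conjFn g q.1 ≤ (q.2 : EReal)}

/-- The set `𝓐_𝓗 = ⋃_{H ∈ 𝓗} ⋃_{μ ∈ ℝ₊^H} epi (f + ∑_{t∈H} μ_t f_t)^*`. -/
def ASet {X T : Type*} [AddCommGroup X] [Module ℝ X] [TopologicalSpace X]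
    (f : X → EReal) (ft : T → X → EReal) (𝓗 : Set (Finset T)) :
    Set (WeakDual ℝ X × ℝ) :=
  {q | ∃ H ∈ 𝓗, ∃ μ : T → ℝ, (∀ t ∈ H, 0 ≤ μ t) ∧ q ∈ epiConj (lagFn f ft H μ)}

/-- The convex cone generated by a set: `cone A = ℝ≥0 • (co A)`. -/
def coneGen {M : Type*} [AddCommMonoid M] [Module ℝ M] (A : Set M) : Set M :=
  {p | ∃ c : ℝ, 0 ≤ c ∧ ∃ q ∈ convexHull ℝ A, p = c • q}

/-- `φ_𝓗(x*) = inf_{H ∈ 𝓗, μ ∈ ℝ₊^H} (f + ∑_{t∈H} μ_t f_t)^*(x*)`. -/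
noncomputable def phiH {X T : Type*} [AddCommGroup X] [Module ℝ X] [TopologicalSpace X]
    (f : X → EReal) (ft : T → X → EReal) (𝓗 : Set (Finset T)) (p : WeakDual ℝ X) : EReal :=
  ⨅ H ∈ 𝓗, ⨅ μ : {μ : T → ℝ // ∀ t ∈ H, 0 ≤ μ t}, conjFn (lagFn f ft H μ.1) p

section Aux
variable {X T : Type*} [AddCommGroup X] [Module ℝ X] [TopologicalSpace X]

lemma conjFn_antitone {g h : X → EReal} (hle : ∀ x, g x ≤ h x) (p : WeakDual ℝ X) :
    conjFn h p ≤ conjFn g p :=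
  iSup_mono fun x => EReal.sub_le_sub le_rfl (hle x)

lemma lag_le_fPlus (f : X → EReal) (ft : T → X → EReal) (H : Finset T) (μ : T → ℝ)
    (hμ : ∀ t ∈ H, 0 ≤ μ t) (x : X) : lagFn f ft H μ x ≤ fPlusIndicator f ft x := by
  unfold lagFn fPlusIndicator
  split
  · next h =>
    calc f x + ∑ t ∈ H, ((μ t : EReal) * ft t x) ≤ f x + 0 := by
          refine add_le_add (le_refl (f x)) (Finset.sum_nonpos fun t ht => ?_)
          exact mul_nonpos_of_nonneg_of_nonpos (by exact_mod_cast hμ t ht) (h t)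
      _ = f x := add_zero _
  · exact le_top

lemma isClosed_epiConj {g : X → EReal} (hg : ∀ x, g x ≠ ⊥) : IsClosed (epiConj g) := by
  have heq : epiConj g = ⋂ x : X,
      {q : WeakDual ℝ X × ℝ | ((q.1 x : ℝ) : EReal) - g x ≤ (q.2 : EReal)} := by
    ext q
    simp only [epiConj, conjFn, Set.mem_setOf_eq, iSup_le_iff, Set.mem_iInter]
  rw [heq]
  refine isClosed_iInter fun x => ?_
  by_cases hgt : g x = ⊤
  · have : {q : WeakDual ℝ X × ℝ | ((q.1 x : ℝ) : EReal) - g x ≤ (q.2 : EReal)} = Set.univ := by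
      ext q; simp [hgt, EReal.sub_top]
    rw [this]; exact isClosed_univ
  · lift g x to ℝ using ⟨hgt, hg x⟩ with c hc
    have : {q : WeakDual ℝ X × ℝ | ((q.1 x : ℝ) : EReal) - (c : EReal) ≤ (q.2 : EReal)} =
        {q : WeakDual ℝ X × ℝ | q.1 x - c ≤ q.2} := by
      ext q; simp only [Set.mem_setOf_eq, ← EReal.coe_sub, EReal.coe_le_coe_iff]
    rw [this]
    exact isClosed_le (((WeakDual.eval_continuous x).comp continuous_fst).sub continuous_const)
      continuous_snd

lemma convex_epiConj {g : X → EReal} (hg : ∀ x, g x ≠ ⊥) : Convex ℝ (epiConj g) := by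
  intro q1 hq1 q2 hq2 a b ha hb hab
  simp only [epiConj, Set.mem_setOf_eq, conjFn, iSup_le_iff] at hq1 hq2 ⊢
  intro x
  have h1 := hq1 x
  have h2 := hq2 x
  by_cases hgt : g x = ⊤
  · rw [hgt, EReal.sub_top]; exact bot_le
  · lift g x to ℝ using ⟨hgt, hg x⟩ with c hc
    have h1' : q1.1 x - c ≤ q1.2 := by exact_mod_cast h1
    have h2' : q2.1 x - c ≤ q2.2 := by exact_mod_cast h2
    have e1 : (a • q1 + b • q2).1 x = a * (q1.1 x) + b * (q2.1 x) := rfl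
    have e2 : (a • q1 + b • q2).2 = a * q1.2 + b * q2.2 := rfl
    rw [e1, e2]
    have hb' : b = 1 - a := by linarith
    subst hb'
    have : (a * (q1.1 x) + (1-a) * (q2.1 x)) - c ≤ a * q1.2 + (1-a) * q2.2 := by
      nlinarith [mul_le_mul_of_nonneg_left h1' ha, mul_le_mul_of_nonneg_left h2' hb]
    exact_mod_cast this

end Aux

theorem zero_duality_gap_implies_sectional_closedness {X T : Type*}
    [AddCommGroup X] [Module ℝ X] [TopologicalSpace X]
    (f : X → EReal) (ft : T → X → EReal)
    (hf : ∀ x, f x ≠ ⊥) (hfprop : ∃ x, f x ≠ ⊤)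
    (hft : ∀ t x, ft t x ≠ ⊥) (hftprop : ∀ t, ∃ x, ft t x ≠ ⊤)
    (𝓗 : Set (Finset T)) (h𝓗ne : 𝓗.Nonempty) (h𝓗mem : ∀ H ∈ 𝓗, H.Nonempty)
    (xs : WeakDual ℝ X)
    (hgap : conjFn (fPlusIndicator f ft) xs = phiH f ft 𝓗 xs) :
    closure (convexHull ℝ (ASet f ft 𝓗)) ∩ ({xs} ×ˢ (Set.univ : Set ℝ)) =
      closure (ASet f ft 𝓗 ∩ ({xs} ×ˢ (Set.univ : Set ℝ))) := by
  have hne : ∀ x, fPlusIndicator f ft x ≠ ⊥ := by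
    intro x; unfold fPlusIndicator; split
    · exact hf x
    · simp
  have hAsub : ASet f ft 𝓗 ⊆ epiConj (fPlusIndicator f ft) := by
    rintro q ⟨H, hH, μ, hμ, hq⟩
    exact le_trans (conjFn_antitone (lag_le_fPlus f ft H μ hμ) q.1) hq
  have hsub : closure (convexHull ℝ (ASet f ft 𝓗)) ⊆ epiConj (fPlusIndicator f ft) :=
    closure_minimal (convexHull_min hAsub (convex_epiConj hne)) (isClosed_epiConj hne)
  apply Set.Subset.antisymm
  · rintro ⟨p, r⟩ ⟨hcl, hp, -⟩
    simp only [Set.mem_singleton_iff] at hp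
    subst hp
    have hler : phiH f ft 𝓗 p ≤ (r : EReal) := by
      rw [← hgap]; exact hsub hcl
    have key : ∀ n : ℕ, ((p, r + 1/((n : ℝ)+1)) : WeakDual ℝ X × ℝ) ∈
        ASet f ft 𝓗 ∩ ({p} ×ˢ (Set.univ : Set ℝ)) := by
      intro n
      have hrlt : (r : EReal) < ((r + 1/((n : ℝ)+1) : ℝ) : EReal) := by
        apply EReal.coe_lt_coe_iff.2
        have : (0:ℝ) < 1/((n:ℝ)+1) := by positivity
        linarith
      have hlt := lt_of_le_of_lt hler hrlt
      rw [phiH, iInf_lt_iff] at hlt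
      obtain ⟨H, hlt⟩ := hlt
      rw [iInf_lt_iff] at hlt
      obtain ⟨hH, hlt⟩ := hlt
      rw [iInf_lt_iff] at hlt
      obtain ⟨⟨μ, hμ⟩, hlt⟩ := hlt
      exact ⟨⟨H, hH, μ, hμ, le_of_lt hlt⟩, rfl, trivial⟩
    have htend : Filter.Tendsto (fun n : ℕ => ((p, r + 1/((n : ℝ)+1)) : WeakDual ℝ X × ℝ))
        Filter.atTop (nhds (p, r)) := by
      rw [nhds_prod_eq]
      refine Filter.Tendsto.prodMk
        (tendsto_const_nhds : Filter.Tendsto (fun _ : ℕ => p) Filter.atTop (nhds p)) ?_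
      have h0 : Filter.Tendsto (fun n : ℕ => 1/((n : ℝ)+1)) Filter.atTop (nhds 0) :=
        tendsto_one_div_add_atTop_nhds_zero_nat
      simpa using tendsto_const_nhds.add h0
    exact mem_closure_of_tendsto htend (Filter.Eventually.of_forall key)
  · refine closure_minimal ?_ (isClosed_closure.inter (isClosed_singleton.prod isClosed_univ))
    exact Set.inter_subset_inter_left _ ((subset_convexHull ℝ _).trans subset_closure)
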